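/- Let n ≥ 1, let L : ℝ → Mat_n(ℂ) be differentiable and M : ℝ → Mat_n(ℂ) be such that dL/dt = M(t)L(t) − L(t)M(t) for all t ∈ ℝ. Then for every natural number m, the function t ↦ trace(L(t)^m) is constant on ℝ. In particular, the Lax equation is an isospectral deformation: the characteristic polynomial of L(t) does not depend on t. -/

import Mathlib

open Polynomial Matrix Finset

namespace LaxAux

variable {n : ℕ}




/-- derivative of entries of `L^m` -/
lemma hasDerivAt_pow_entry (L D : ℝ → Matrix (Fin n) (Fin n) ℂ)
    (hLax : ∀ (t : ℝ) (i j : Fin n), HasDerivAt (fun s => L s i j) (D t i j) t)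
    (m : ℕ) (t : ℝ) (i j : Fin n) :
    HasDerivAt (fun s => (L s ^ m) i j)
      ((∑ k ∈ Finset.range m, L t ^ k * D t * L t ^ (m - 1 - k)) i j) t := by
  induction m generalizing i j with
  | zero => simpa using hasDerivAt_const t ((1 : Matrix (Fin n) (Fin n) ℂ) i j)
  | succ m ih =>
    have key : HasDerivAt (fun s => ∑ c, (L s ^ m) i c * L s c j)
        (∑ c, ((∑ k ∈ Finset.range m, L t ^ k * D t * L t ^ (m - 1 - k)) i c * L t c j
          + (L t ^ m) i c * D t c j)) t :=
      HasDerivAt.fun_sum fun c _ => (ih i c).mul (hLax t c j)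
    have e1 : (fun s => (L s ^ (m + 1)) i j) = fun s => ∑ c, (L s ^ m) i c * L s c j := by
      funext s; rw [pow_succ, Matrix.mul_apply]
    have e2 : (∑ c, ((∑ k ∈ Finset.range m, L t ^ k * D t * L t ^ (m - 1 - k)) i c * L t c j
          + (L t ^ m) i c * D t c j))
        = ((∑ k ∈ Finset.range m, L t ^ k * D t * L t ^ (m - 1 - k)) * L t + L t ^ m * D t) i j := by
      simp [Matrix.add_apply, Matrix.mul_apply, Finset.sum_add_distrib]
    have e3 : (∑ k ∈ Finset.range m, L t ^ k * D t * L t ^ (m - 1 - k)) * L t + L t ^ m * D t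
        = ∑ k ∈ Finset.range (m + 1), L t ^ k * D t * L t ^ (m + 1 - 1 - k) := by
      rw [Finset.sum_range_succ, Finset.sum_mul]
      congr 1
      · refine Finset.sum_congr rfl fun k hk => ?_
        rw [Finset.mem_range] at hk
        rw [mul_assoc, ← pow_succ]
        congr 2
        omega
      · simp
    rw [e1]
    rw [e2, e3] at key
    exact key

lemma trace_deriv_zero (L M : ℝ → Matrix (Fin n) (Fin n) ℂ) (m : ℕ) (t : ℝ) :
    Matrix.trace (∑ k ∈ Finset.range m,
      L t ^ k * (M t * L t - L t * M t) * L t ^ (m - 1 - k)) = 0 := by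
  rw [Matrix.trace_sum]
  refine Finset.sum_eq_zero fun k hk => ?_
  rw [Finset.mem_range] at hk
  have h1 : L t ^ k * (M t * L t - L t * M t) * L t ^ (m - 1 - k)
      = L t ^ k * M t * L t ^ (m - k) - L t ^ (k + 1) * M t * L t ^ (m - 1 - k) := by
    have : L t * L t ^ (m - 1 - k) = L t ^ (m - k) := by
      rw [← pow_succ']; congr 1; omega
    rw [mul_sub, sub_mul]
    congr 1
    · rw [← mul_assoc, mul_assoc (L t ^ k * M t), this]
    · rw [← mul_assoc, mul_assoc (L t ^ k), ← mul_assoc, ← pow_succ]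
  rw [h1, Matrix.trace_sub, Matrix.trace_mul_comm (L t ^ k * M t),
    Matrix.trace_mul_comm (L t ^ (k + 1) * M t), ← mul_assoc, ← pow_add, ← mul_assoc, ← pow_add]
  have : m - k + k = m - 1 - k + (k + 1) := by omega
  rw [this, sub_self]



lemma trace_pow_const (n : ℕ) (L M : ℝ → Matrix (Fin n) (Fin n) ℂ)
    (hLax : ∀ (t : ℝ) (i j : Fin n),
      HasDerivAt (fun s => L s i j) ((M t * L t - L t * M t) i j) t)
    (m : ℕ) (t s : ℝ) : Matrix.trace (L t ^ m) = Matrix.trace (L s ^ m) := by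
  have hf : ∀ u : ℝ, HasDerivAt (fun s => Matrix.trace (L s ^ m)) 0 u := by
    intro u
    have h := HasDerivAt.fun_sum (fun i (_ : i ∈ (Finset.univ : Finset (Fin n))) =>
      hasDerivAt_pow_entry L (fun t => M t * L t - L t * M t) (fun t i j => hLax t i j) m u i i)
    have e : (fun s => ∑ i, (L s ^ m) i i) = fun s => Matrix.trace (L s ^ m) := by
      funext s; rw [Matrix.trace]; rfl
    rw [e] at h
    have e2 : (∑ i, (∑ k ∈ Finset.range m,
        L u ^ k * (M u * L u - L u * M u) * L u ^ (m - 1 - k)) i i) = 0 := by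
      have := trace_deriv_zero L M m u
      rw [Matrix.trace] at this
      simpa [Matrix.diag] using this
    rwa [e2] at h
  exact is_const_of_deriv_eq_zero (fun u => (hf u).differentiableAt)
    (fun u => (hf u).deriv) t s


lemma eval_charpoly (A : Matrix (Fin n) (Fin n) ℂ) (c : ℂ) :
    Polynomial.eval c A.charpoly = Matrix.det (c • (1 : Matrix (Fin n) (Fin n) ℂ) - A) := by
  rw [Matrix.charpoly, ← Polynomial.coe_evalRingHom, RingHom.map_det]
  congr 1
  ext i j
  by_cases h : i = j
  · subst h
    simp [Matrix.charmatrix_apply_eq, Matrix.one_apply]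
  · simp [Matrix.charmatrix_apply_ne _ _ _ h, Matrix.one_apply_ne h]

lemma det_sub_smul_one (A : Matrix (Fin n) (Fin n) ℂ) (c : ℂ) :
    Matrix.det (A - c • (1 : Matrix (Fin n) (Fin n) ℂ))
      = (A.charpoly.roots.map (fun ρ => ρ - c)).prod := by
  have hsp : A.charpoly.Splits := IsAlgClosed.splits _
  have hprod : A.charpoly = (A.charpoly.roots.map (fun r => X - C r)).prod :=
    (hsp.eq_prod_roots_of_monic A.charpoly_monic)
  have h1 : Matrix.det (A - c • 1) = (-1) ^ n * Polynomial.eval c A.charpoly := by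
    rw [eval_charpoly]
    rw [show A - c • (1 : Matrix (Fin n) (Fin n) ℂ) = -(c • 1 - A) by abel]
    rw [Matrix.det_neg]
    simp [Fintype.card_fin]
  rw [h1]
  conv_lhs => rw [hprod]
  rw [Polynomial.eval_multiset_prod, Multiset.map_map]
  simp only [Function.comp_def]
  have hcard : Multiset.card A.charpoly.roots = n := by
    rw [(Polynomial.splits_iff_card_roots).mp hsp, Matrix.charpoly_natDegree_eq_dim,
      Fintype.card_fin]
  have : (Multiset.map (fun r => Polynomial.eval c (X - C r)) A.charpoly.roots).prod
      = (Multiset.map (fun r => c - r) A.charpoly.roots).prod := by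
    congr 1; apply Multiset.map_congr rfl; intro r _; simp
  rw [this]
  have : (Multiset.map (fun ρ => ρ - c) A.charpoly.roots).prod
      = (Multiset.map (fun ρ => (-1) * (c - ρ)) A.charpoly.roots).prod := by
    congr 1; apply Multiset.map_congr rfl; intro r _; ring
  rw [this]
  rw [show (fun ρ => (-1 : ℂ) * (c - ρ)) = fun ρ => ((fun _ => (-1 : ℂ)) ρ) * ((fun ρ => c - ρ) ρ) from rfl,
    Multiset.prod_map_mul, Multiset.map_const', Multiset.prod_replicate, hcard]


lemma prod_swap (w R : Multiset ℂ) (f : ℂ → ℂ → ℂ) :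
    (w.map (fun r => (R.map (fun ρ => f ρ r)).prod)).prod
      = (R.map (fun ρ => (w.map (fun r => f ρ r)).prod)).prod := by
  induction w using Multiset.induction with
  | empty => simp
  | cons a w ih => simp [Multiset.prod_map_mul, ih]

lemma neg_flip (R : Multiset ℂ) (f : ℂ → ℂ) :
    (R.map (fun ρ => f ρ)).prod = (-1) ^ (Multiset.card R) * (R.map (fun ρ => -f ρ)).prod := by
  have : (R.map (fun ρ => f ρ)).prod = (R.map (fun ρ => (-1 : ℂ) * (-f ρ))).prod := by
    congr 1; apply Multiset.map_congr rfl; intro r _; ring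
  rw [this, show (fun ρ => (-1 : ℂ) * (-f ρ))
      = fun ρ => ((fun _ => (-1 : ℂ)) ρ) * ((fun ρ => -f ρ) ρ) from rfl,
    Multiset.prod_map_mul, Multiset.map_const', Multiset.prod_replicate]

lemma charpoly_pow (A : Matrix (Fin n) (Fin n) ℂ) (m : ℕ) (hm : 0 < m) :
    (A ^ m).charpoly = (A.charpoly.roots.map (fun r => X - C (r ^ m))).prod := by
  have hcard : Multiset.card A.charpoly.roots = n := by
    rw [(Polynomial.splits_iff_card_roots).mp (IsAlgClosed.splits _),
      Matrix.charpoly_natDegree_eq_dim, Fintype.card_fin]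
  apply Polynomial.funext
  intro c
  rw [eval_charpoly, Polynomial.eval_multiset_prod, Multiset.map_map]
  simp only [Function.comp_def, eval_sub, eval_X, eval_C]
  -- factor X^m - C c
  set q : ℂ[X] := X ^ m - C c with hqdef
  have hq : q.Monic := monic_X_pow_sub_C c hm.ne'
  have hfac : q = (q.roots.map (fun r => X - C r)).prod :=
    (IsAlgClosed.splits _).eq_prod_roots_of_monic hq
  set l : List ℂ := q.roots.toList with hldef
  have hl : (l : Multiset ℂ) = q.roots := Multiset.coe_toList _
  -- aeval A of the factorization
  have haev : A ^ m - c • 1 = (l.map (fun r => A - r • 1)).prod := by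
    have h := congrArg (Polynomial.aeval A) hfac
    have h1 : Polynomial.aeval A q = A ^ m - c • 1 := by
      simp [hqdef, Algebra.algebraMap_eq_smul_one]
    have h2 : Polynomial.aeval A ((q.roots.map (fun r => X - C r)).prod)
        = (l.map (fun r => A - r • 1)).prod := by
      rw [← hl, Multiset.map_coe, Multiset.prod_coe,
        map_list_prod (Polynomial.aeval A : ℂ[X] →ₐ[ℂ] Matrix (Fin n) (Fin n) ℂ), List.map_map]
      congr 1
      apply List.map_congr_left
      intro r _
      simp [Algebra.algebraMap_eq_smul_one]
    rw [h1, h2] at h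
    exact h
  have hdet : Matrix.det (c • (1 : Matrix (Fin n) (Fin n) ℂ) - A ^ m)
      = (-1) ^ n * (l.map (fun r => Matrix.det (A - r • 1))).prod := by
    have hd := map_list_prod (Matrix.detMonoidHom : Matrix (Fin n) (Fin n) ℂ →* ℂ)
      (l.map (fun r => A - r • 1))
    simp only [Matrix.coe_detMonoidHom, List.map_map, Function.comp_def] at hd
    rw [show c • (1 : Matrix (Fin n) (Fin n) ℂ) - A ^ m = -(A ^ m - c • 1) by abel,
      Matrix.det_neg, Fintype.card_fin, haev, hd]
  rw [hdet]
  have hinner : (l.map (fun r => Matrix.det (A - r • 1))).prod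
      = (A.charpoly.roots.map (fun ρ => Polynomial.eval ρ q)).prod := by
    have : (l.map (fun r => Matrix.det (A - r • 1))).prod
        = ((q.roots.map (fun r => (A.charpoly.roots.map (fun ρ => ρ - r)).prod))).prod := by
      rw [← hl, Multiset.map_coe, Multiset.prod_coe]
      congr 1
      apply List.map_congr_left
      intro r _
      exact det_sub_smul_one A r
    rw [this, prod_swap]
    congr 1
    apply Multiset.map_congr rfl
    intro ρ _
    conv_rhs => rw [hfac]
    rw [Polynomial.eval_multiset_prod, Multiset.map_map]
    simp [Function.comp_def]
  rw [hinner]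
  have : (A.charpoly.roots.map (fun ρ => Polynomial.eval ρ q)).prod
      = (A.charpoly.roots.map (fun ρ => ρ ^ m - c)).prod := by
    congr 1; apply Multiset.map_congr rfl; intro ρ _; simp [hqdef]
  rw [this, neg_flip A.charpoly.roots (fun ρ => ρ ^ m - c), hcard, ← mul_assoc,
    ← pow_add]
  have hflip : (A.charpoly.roots.map (fun ρ => -(ρ ^ m - c))).prod
      = (A.charpoly.roots.map (fun ρ => c - ρ ^ m)).prod := by
    congr 1; apply Multiset.map_congr rfl; intro ρ _; ring
  rw [hflip, ← two_mul, pow_mul]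
  norm_num

lemma trace_pow_eq (A : Matrix (Fin n) (Fin n) ℂ) (m : ℕ) (hm : 0 < m) :
    Matrix.trace (A ^ m) = (A.charpoly.roots.map (fun r => r ^ m)).sum := by
  rw [Matrix.trace_eq_sum_roots_charpoly, charpoly_pow A m hm]
  rw [show (A.charpoly.roots.map (fun r => X - C (r ^ m)))
      = ((A.charpoly.roots.map (fun r => r ^ m)).map (fun a => X - C a)) by rw [Multiset.map_map]; rfl,
    Polynomial.roots_multiset_prod_X_sub_C]


lemma exists_enum (s : Multiset ℂ) {N : ℕ} (h : Multiset.card s = N) :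
    ∃ f : Fin N → ℂ, (Finset.univ.val.map f) = s := by
  have hlen : s.toList.length = N := by rw [Multiset.length_toList, h]
  refine ⟨fun i => s.toList.get (Fin.cast hlen.symm i), ?_⟩
  have h0 : (Finset.univ.val : Multiset (Fin N)) = ↑(List.finRange N) := rfl
  have hlist : List.map (fun i => s.toList.get (Fin.cast hlen.symm i)) (List.finRange N)
      = s.toList := by
    rw [← List.ofFn_eq_map]
    apply List.ext_getElem
    · simp [hlen]
    · intro i h1 h2
      simp
  rw [h0, Multiset.map_coe, hlist, Multiset.coe_toList]

lemma multiset_psum_eval {N : ℕ} (f : Fin N → ℂ) (j : ℕ) :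
    MvPolynomial.aeval f (MvPolynomial.psum (Fin N) ℂ j)
      = ((Finset.univ.val.map f).map (fun x => x ^ j)).sum := by
  rw [MvPolynomial.psum, map_sum]
  simp only [map_pow, MvPolynomial.aeval_X]
  rw [Finset.sum_eq_multiset_sum, Multiset.map_map]
  rfl

lemma multiset_newton (s : Multiset ℂ) {N : ℕ} (h : Multiset.card s = N) (k : ℕ) :
    (k : ℂ) * s.esymm k = (-1) ^ (k + 1) *
      ∑ a ∈ (Finset.HasAntidiagonal.antidiagonal k).filter (fun a => a.1 < k),
        (-1) ^ a.1 * s.esymm a.1 * (s.map (fun x => x ^ a.2)).sum := by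
  obtain ⟨f, hf⟩ := exists_enum s h
  have key := congrArg (MvPolynomial.aeval f) (MvPolynomial.mul_esymm_eq_sum (Fin N) ℂ k)
  simp only [_root_.map_mul, map_natCast, map_sum, map_pow, map_neg, _root_.map_one,
    MvPolynomial.aeval_esymm_eq_multiset_esymm, multiset_psum_eval, hf] at key
  exact key

lemma esymm_zero' (s : Multiset ℂ) : s.esymm 0 = 1 := by
  simp [Multiset.esymm, Multiset.powersetCard_zero_left]

lemma esymm_eq_of_psum_eq (s u : Multiset ℂ) {N : ℕ}
    (hs : Multiset.card s = N) (hu : Multiset.card u = N)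
    (hp : ∀ m, 0 < m → (s.map (fun x => x ^ m)).sum = (u.map (fun x => x ^ m)).sum) :
    ∀ k, s.esymm k = u.esymm k := by
  intro k
  induction k using Nat.strong_induction_on with
  | _ k ih =>
    rcases Nat.eq_zero_or_pos k with hk | hk
    · subst hk; rw [esymm_zero', esymm_zero']
    · have h1 := multiset_newton s hs k
      have h2 := multiset_newton u hu k
      have hsum : ∑ a ∈ (Finset.HasAntidiagonal.antidiagonal k).filter (fun a => a.1 < k),
            (-1 : ℂ) ^ a.1 * s.esymm a.1 * (s.map (fun x => x ^ a.2)).sum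
          = ∑ a ∈ (Finset.HasAntidiagonal.antidiagonal k).filter (fun a => a.1 < k),
            (-1 : ℂ) ^ a.1 * u.esymm a.1 * (u.map (fun x => x ^ a.2)).sum := by
        refine Finset.sum_congr rfl fun a ha => ?_
        rw [Finset.mem_filter, Finset.HasAntidiagonal.mem_antidiagonal] at ha
        rw [ih a.1 ha.2, hp a.2 (by omega)]
      have : (k : ℂ) * s.esymm k = (k : ℂ) * u.esymm k := by rw [h1, h2, hsum]
      exact mul_left_cancel₀ (Nat.cast_ne_zero.mpr hk.ne') this


lemma charpoly_eq_of_trace_pow (A B : Matrix (Fin n) (Fin n) ℂ)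
    (h : ∀ m, 0 < m → Matrix.trace (A ^ m) = Matrix.trace (B ^ m)) :
    A.charpoly = B.charpoly := by
  have hspA : A.charpoly.Splits := IsAlgClosed.splits _
  have hspB : B.charpoly.Splits := IsAlgClosed.splits _
  have hdA : A.charpoly.natDegree = n := by
    rw [Matrix.charpoly_natDegree_eq_dim, Fintype.card_fin]
  have hdB : B.charpoly.natDegree = n := by
    rw [Matrix.charpoly_natDegree_eq_dim, Fintype.card_fin]
  have hcA : Multiset.card A.charpoly.roots = n := by
    rw [(Polynomial.splits_iff_card_roots).mp hspA, hdA]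
  have hcB : Multiset.card B.charpoly.roots = n := by
    rw [(Polynomial.splits_iff_card_roots).mp hspB, hdB]
  have hp : ∀ m, 0 < m → (A.charpoly.roots.map (fun x => x ^ m)).sum
      = (B.charpoly.roots.map (fun x => x ^ m)).sum := by
    intro m hm
    rw [← trace_pow_eq A m hm, ← trace_pow_eq B m hm]
    exact h m hm
  have he := esymm_eq_of_psum_eq A.charpoly.roots B.charpoly.roots hcA hcB hp
  ext k
  by_cases hk : k ≤ n
  · have hkA : k ≤ A.charpoly.natDegree := by omega
    have hkB : k ≤ B.charpoly.natDegree := by omega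
    rw [Polynomial.coeff_eq_esymm_roots_of_splits hspA hkA,
      Polynomial.coeff_eq_esymm_roots_of_splits hspB hkB,
      A.charpoly_monic.leadingCoeff, B.charpoly_monic.leadingCoeff, hdA, hdB, he]
  · rw [Polynomial.coeff_eq_zero_of_natDegree_lt (by omega : A.charpoly.natDegree < k),
      Polynomial.coeff_eq_zero_of_natDegree_lt (by omega : B.charpoly.natDegree < k)]

end LaxAux

/-- the Lax equation `dL/dt = [M, L]` is an isospectral deformation:
all traces of powers of `L(t)`, and hence the characteristic polynomial of
`L(t)`, are constant in `t`. -/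
theorem stmt_4 (n : ℕ) (hn : 1 ≤ n) (L M : ℝ → Matrix (Fin n) (Fin n) ℂ)
    (hLax : ∀ (t : ℝ) (i j : Fin n),
      HasDerivAt (fun s => L s i j) ((M t * L t - L t * M t) i j) t) :
    (∀ (m : ℕ) (t s : ℝ), Matrix.trace (L t ^ m) = Matrix.trace (L s ^ m)) ∧
    (∀ t s : ℝ, (L t).charpoly = (L s).charpoly) := by
  have h1 : ∀ (m : ℕ) (t s : ℝ), Matrix.trace (L t ^ m) = Matrix.trace (L s ^ m) :=
    fun m t s => LaxAux.trace_pow_const n L M hLax m t s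
  refine ⟨h1, fun t s => ?_⟩
  exact LaxAux.charpoly_eq_of_trace_pow (L t) (L s) (fun m _ => h1 m t s)
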